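/- Suppose 1 < p < ∞, ‖θ‖_{p,*} ≤ α₁ + α₂, let α̂ = min(α₁, α₂) and x̂ = x₂ if α₁ < α₂ else x̂ = x₁. Then the gap between the supremum sup_x (f(⟨θ,x⟩) − α₁‖x₁−x‖_p − α₂‖x₂−x‖_p) and its lower bound f(⟨θ, x̂⟩) − α̂·‖x₁−x₂‖_p is at most 2·α̂·‖x₁−x₂‖_p. In particular the lower bound never exceeds the supremum, and the supremum exceeds the lower bound by at most 2·α̂·‖x₁−x₂‖_p. -/

import Mathlib

noncomputable def pnorm {n : ℕ} (p : ℝ) (v : Fin n → ℝ) : ℝ :=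
  (∑ i, |v i| ^ p) ^ (1 / p)

def dot {n : ℕ} (v w : Fin n → ℝ) : ℝ := ∑ i, v i * w i

lemma pnorm_nonneg {n : ℕ} (p : ℝ) (v : Fin n → ℝ) : 0 ≤ pnorm p v :=
  Real.rpow_nonneg (Finset.sum_nonneg fun i _ => Real.rpow_nonneg (abs_nonneg _) _) _

lemma pnorm_sub_comm {n : ℕ} (p : ℝ) (a b : Fin n → ℝ) :
    pnorm p (a - b) = pnorm p (b - a) := by
  unfold pnorm
  congr 1
  apply Finset.sum_congr rfl
  intro i _
  rw [show (a - b) i = -((b - a) i) by simp [sub_eq_neg_add], abs_neg]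

lemma pnorm_self {n : ℕ} {p : ℝ} (hp : 0 < p) (a : Fin n → ℝ) : pnorm p (a - a) = 0 := by
  unfold pnorm
  simp [Real.zero_rpow hp.ne', Real.zero_rpow (inv_ne_zero hp.ne')]

lemma pnorm_triangle {n : ℕ} {p : ℝ} (hp : 1 ≤ p) (a b c : Fin n → ℝ) :
    pnorm p (a - c) ≤ pnorm p (a - b) + pnorm p (b - c) := by
  have h := Real.Lp_add_le (Finset.univ : Finset (Fin n)) (fun i => a i - b i)
    (fun i => b i - c i) hp
  simpa [pnorm, sub_add_sub_cancel] using h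

lemma abs_dot_le {n : ℕ} {p r : ℝ} (hpr : Real.HolderConjugate p r) (θ v : Fin n → ℝ) :
    |dot θ v| ≤ pnorm r θ * pnorm p v := by
  rw [abs_le]
  constructor
  · have h := Real.inner_le_Lp_mul_Lq (Finset.univ : Finset (Fin n)) θ (fun i => -v i) hpr.symm
    simp only [abs_neg, mul_neg] at h
    rw [Finset.sum_neg_distrib] at h
    have : pnorm r θ * pnorm p v = (∑ i, |θ i| ^ r) ^ (1 / r) * (∑ i, |v i| ^ p) ^ (1 / p) := rfl
    unfold dot pnorm
    linarith [h]
  · have h := Real.inner_le_Lp_mul_Lq (Finset.univ : Finset (Fin n)) θ v hpr.symm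
    exact h

lemma logexp_lip (a b : ℝ) :
    Real.log (1 + Real.exp a) ≤ Real.log (1 + Real.exp b) + |a - b| := by
  have e2 : (1 : ℝ) ≤ Real.exp |a - b| := Real.one_le_exp (abs_nonneg _)
  have e1 : Real.exp a ≤ Real.exp |a - b| * Real.exp b := by
    rw [← Real.exp_add]
    exact Real.exp_le_exp.2 (by have := le_abs_self (a - b); linarith)
  have h1 : (1 : ℝ) + Real.exp a ≤ Real.exp |a - b| * (1 + Real.exp b) := by
    nlinarith [Real.exp_pos b]
  calc Real.log (1 + Real.exp a)
      ≤ Real.log (Real.exp |a - b| * (1 + Real.exp b)) :=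
        Real.log_le_log (by positivity) h1
    _ = |a - b| + Real.log (1 + Real.exp b) := by
        rw [Real.log_mul (by positivity) (by positivity), Real.log_exp]
    _ = Real.log (1 + Real.exp b) + |a - b| := by ring

lemma dot_sub (n : ℕ) (θ x z : Fin n → ℝ) : dot θ x - dot θ z = dot θ (x - z) := by
  unfold dot
  rw [← Finset.sum_sub_distrib]
  apply Finset.sum_congr rfl
  intro i _
  simp [mul_sub]

lemma key_bound {n : ℕ} {p r β γ : ℝ} (hpr : Real.HolderConjugate p r)
    (hβ : 0 < β) (hγ : 0 < γ) (y z θ x : Fin n → ℝ) (hθ : pnorm r θ ≤ β + γ) :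
    Real.log (1 + Real.exp (dot θ x)) - β * pnorm p (y - x) - γ * pnorm p (z - x)
      ≤ Real.log (1 + Real.exp (dot θ z)) + β * pnorm p (y - z) := by
  have hlip := logexp_lip (dot θ x) (dot θ z)
  have habs : |dot θ x - dot θ z| ≤ (β + γ) * pnorm p (x - z) := by
    rw [dot_sub]
    refine (abs_dot_le hpr θ (x - z)).trans ?_
    exact mul_le_mul_of_nonneg_right hθ (pnorm_nonneg _ _)
  rw [pnorm_sub_comm p x z] at habs
  have htri : pnorm p (z - x) ≤ pnorm p (z - y) + pnorm p (y - x) :=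
    pnorm_triangle hpr.lt.le z y x
  rw [pnorm_sub_comm p z y] at htri
  have h1 := pnorm_nonneg p (z - x)
  have h2 := pnorm_nonneg p (y - x)
  have h3 := pnorm_nonneg p (y - z)
  nlinarith [hβ.le, hγ.le]

theorem stmt_15 (n : ℕ) (p r α₁ α₂ : ℝ) (hp : 1 < p) (hpr : 1 / p + 1 / r = 1)
    (hα₁ : 0 < α₁) (hα₂ : 0 < α₂)
    (x₁ x₂ θ : Fin n → ℝ) (hθ : pnorm r θ ≤ α₁ + α₂)
    (xhat : Fin n → ℝ) (hxhat : xhat = if α₁ < α₂ then x₂ else x₁)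
    (L S : ℝ)
    (hL : L = Real.log (1 + Real.exp (dot θ xhat)) - min α₁ α₂ * pnorm p (x₁ - x₂))
    (hS : S = sSup (Set.range fun x : Fin n → ℝ =>
        Real.log (1 + Real.exp (dot θ x)) - α₁ * pnorm p (x₁ - x) - α₂ * pnorm p (x₂ - x))) :
    L ≤ S ∧ S ≤ L + 2 * min α₁ α₂ * pnorm p (x₁ - x₂) := by
  have hconj : Real.HolderConjugate p r := Real.holderConjugate_iff.mpr ⟨hp, by rw [← one_div, ← one_div]; exact hpr⟩
  set g : (Fin n → ℝ) → ℝ := fun x =>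
    Real.log (1 + Real.exp (dot θ x)) - α₁ * pnorm p (x₁ - x) - α₂ * pnorm p (x₂ - x) with hg
  -- the value at xhat equals L
  have hval : g xhat = L := by
    by_cases h : α₁ < α₂
    · rw [hxhat, if_pos h, hL, hxhat, if_pos h, hg]
      simp only
      rw [min_eq_left h.le, pnorm_self (by linarith : (0:ℝ) < p) x₂,
        pnorm_sub_comm p x₁ x₂]
      ring
    · rw [hxhat, if_neg h, hL, hxhat, if_neg h, hg]
      simp only
      rw [min_eq_right (not_lt.1 h), pnorm_self (by linarith : (0:ℝ) < p) x₁,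
        pnorm_sub_comm p x₂ x₁]
      ring
  -- upper bound for all x
  have hub : ∀ x, g x ≤ L + 2 * min α₁ α₂ * pnorm p (x₁ - x₂) := by
    intro x
    by_cases h : α₁ < α₂
    · have hk := key_bound hconj hα₁ hα₂ x₁ x₂ θ x hθ
      rw [hL, hxhat, if_pos h, min_eq_left h.le, hg]
      simp only
      linarith [hk]
    · have hk := key_bound hconj hα₂ hα₁ x₂ x₁ θ x (by linarith)
      rw [hL, hxhat, if_neg h, min_eq_right (not_lt.1 h), hg]
      simp only
      rw [pnorm_sub_comm p x₂ x₁] at hk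
      linarith [hk]
  have hbdd : BddAbove (Set.range g) := by
    refine ⟨L + 2 * min α₁ α₂ * pnorm p (x₁ - x₂), ?_⟩
    rintro _ ⟨x, rfl⟩
    exact hub x
  constructor
  · rw [hS, ← hval]
    exact le_csSup hbdd ⟨xhat, rfl⟩
  · rw [hS]
    exact csSup_le (Set.range_nonempty g) (by rintro _ ⟨x, rfl⟩; exact hub x)
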